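/- In a representation where y_j is diagonalizable, if f is a polynomial annihilating y_{j-1} (f(y_{j-1}) = 0), and the intertwiner relations U_j y_{j-1} = y_j U_j and U_j [σ_{j-1}, y_{j-1}] = (q y_{j-1} − q^{-1} y_j)(q y_j − q^{-1} y_{j-1})(1 − c/(y_{j-1} y_j)) hold with y_{j-1}, y_j invertible and commuting, then f(y_j)·(q^2 y_{j-1} − y_j)(y_j − q^{-2} y_{j-1})(y_j − c y_{j-1}^{-1}) = 0. Consequently Spec(y_j) ⊆ Spec(y_{j-1}) ∪ q^{±2}·Spec(y_{j-1}) ∪ c·Spec(y_{j-1})^{-1}. -/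

import Mathlib

open Polynomial

/-- If `u` semiconjugates `a` to `b` (i.e. `u * a = b * u`), it semiconjugates
`p(a)` to `p(b)` for every polynomial `p`. -/
lemma aeval_semiconj {F A : Type*} [Field F] [Ring A] [Algebra F A]
    (a b u : A) (h : u * a = b * u) (p : Polynomial F) :
    (Polynomial.aeval b p) * u = u * Polynomial.aeval a p := by
  have hpow : ∀ n : ℕ, b ^ n * u = u * a ^ n := by
    intro n
    induction n with
    | zero => simp
    | succ n ih =>
      rw [pow_succ, pow_succ, mul_assoc, ← h, ← mul_assoc, ih, mul_assoc]
  induction p using Polynomial.induction_on' with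
  | add p q hp hq => simp [add_mul, mul_add, hp, hq]
  | monomial n t =>
    rw [Polynomial.aeval_monomial, Polynomial.aeval_monomial, mul_assoc, hpow,
      ← mul_assoc, Algebra.commutes, mul_assoc]

/-- On an eigenvector, `p(y)` acts as multiplication by `p(μ)`. -/
lemma aeval_apply_eig {F V : Type*} [Field F] [AddCommGroup V] [Module F V]
    (y : Module.End F V) (μ : F) (x : V) (hx : y x = μ • x) (p : Polynomial F) :
    Polynomial.aeval y p x = p.eval μ • x := by
  have hpow : ∀ n : ℕ, (y ^ n) x = μ ^ n • x := by
    intro n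
    induction n with
    | zero => simp
    | succ n ih =>
      rw [pow_succ, Module.End.mul_apply, hx, map_smul, ih, pow_succ, smul_smul, mul_comm]
  induction p using Polynomial.induction_on' with
  | add p q hp hq => simp [hp, hq, add_smul]
  | monomial n t =>
    rw [Polynomial.aeval_monomial, Module.End.mul_apply, hpow, Polynomial.eval_monomial]
    simp [Module.algebraMap_end_apply, smul_smul, mul_comm]

theorem bmw_spectrum_step
    (F : Type*) [Field F] [IsAlgClosed F]
    (V : Type*) [AddCommGroup V] [Module F V] [FiniteDimensional F V]
    (q c : F) (hq : q ≠ 0) (hc : c ≠ 0)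
    (y' y y'inv yinv U σ : Module.End F V)
    (hdiag : ∃ (ι : Type) (b : Module.Basis ι F V), ∀ i, ∃ μ : F, y (b i) = μ • b i)
    (hy'l : y' * y'inv = 1) (hy'r : y'inv * y' = 1)
    (hyl : y * yinv = 1) (hyr : yinv * y = 1)
    (hcomm : y' * y = y * y')
    (hU1 : U * y' = y * U) (hU2 : U * y = y' * U)
    (hU3 : U * (σ * y' - y' * σ) =
      (q • y' - q⁻¹ • y) * (q • y - q⁻¹ • y') * (1 - c • (y'inv * yinv)))
    (f : Polynomial F) (hf : Polynomial.aeval y' f = 0) :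
    (Polynomial.aeval y f) *
        ((q ^ 2 • y' - y) * (y - (q⁻¹) ^ 2 • y') * (y - c • y'inv)) = 0 ∧
      ∀ μ ∈ spectrum F y, ∃ lam ∈ spectrum F y',
        μ = lam ∨ μ = q ^ 2 * lam ∨ μ = (q⁻¹) ^ 2 * lam ∨ μ = c * lam⁻¹ := by
  set P : Module.End F V :=
    (q ^ 2 • y' - y) * (y - (q⁻¹) ^ 2 • y') * (y - c • y'inv) with hP
  -- the quadratic part of `P` agrees with the one in `hU3`
  have hquad : (q ^ 2 • y' - y) * (y - (q⁻¹) ^ 2 • y')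
      = (q • y' - q⁻¹ • y) * (q • y - q⁻¹ • y') := by
    have e1 : q ^ 2 * (q⁻¹) ^ 2 = 1 := by field_simp
    have e1' : (q⁻¹) ^ 2 * q ^ 2 = 1 := by field_simp
    have e2 : q * q⁻¹ = 1 := mul_inv_cancel₀ hq
    have e3 : q⁻¹ * q = 1 := inv_mul_cancel₀ hq
    calc (q ^ 2 • y' - y) * (y - (q⁻¹) ^ 2 • y')
        = q ^ 2 • (y' * y) - (y' * y') - y * y + (q⁻¹) ^ 2 • (y * y') := by
          simp only [sub_mul, mul_sub, smul_sub, smul_mul_assoc, mul_smul_comm,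
            smul_smul, e1, e1', one_smul]
          abel
      _ = (q • y' - q⁻¹ • y) * (q • y - q⁻¹ • y') := by
          simp only [sub_mul, mul_sub, smul_sub, smul_mul_assoc, mul_smul_comm,
            smul_smul, e2, e3, one_smul, ← sq]
          abel
  -- the linear part of `P`
  have hlin : (y - c • y'inv) = (1 - c • (y'inv * yinv)) * y := by
    rw [sub_mul, one_mul, smul_mul_assoc, mul_assoc, hyr, mul_one]
  have hPU : P = U * (σ * y' - y' * σ) * y := by
    rw [hP, hquad, hlin, ← mul_assoc, ← hU3]
  -- key algebraic identity: any polynomial killing y' kills y, modulo P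
  have key : ∀ g : Polynomial F, Polynomial.aeval y' g = 0 →
      Polynomial.aeval y g * P = 0 := by
    intro g hg
    have hsc : Polynomial.aeval y g * U = U * Polynomial.aeval y' g :=
      aeval_semiconj y' y U hU1 g
    calc Polynomial.aeval y g * P
        = (Polynomial.aeval y g * U) * ((σ * y' - y' * σ) * y) := by
          rw [hPU, ← mul_assoc, ← mul_assoc, mul_assoc]
      _ = (U * Polynomial.aeval y' g) * ((σ * y' - y' * σ) * y) := by rw [hsc]
      _ = 0 := by rw [hg, mul_zero, zero_mul]
  refine ⟨key f hf, ?_⟩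
  intro μ hμ
  -- minimal polynomial of y'
  set f0 : Polynomial F := minpoly F y' with hf0def
  have hf0 : Polynomial.aeval y' f0 = 0 := minpoly.aeval F y'
  have hkey0 : Polynomial.aeval y f0 * P = 0 := key f0 hf0
  have hev : y.HasEigenvalue μ := Module.End.hasEigenvalue_iff_mem_spectrum.mpr hμ
  by_cases hval : f0.eval μ = 0
  · refine ⟨μ, ?_, Or.inl rfl⟩
    have : y'.HasEigenvalue μ := Module.End.hasEigenvalue_iff_isRoot.mpr hval
    exact Module.End.hasEigenvalue_iff_mem_spectrum.mp this
  · -- restrict everything to the eigenspace E of y for μ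
    set E := y.eigenspace μ with hE
    have hmemE : ∀ x : V, x ∈ E → y x = μ • x := fun x hx =>
      Module.End.mem_eigenspace_iff.mp hx
    have hy'E : ∀ x ∈ E, y' x ∈ E := by
      intro x hx
      rw [hE, Module.End.mem_eigenspace_iff]
      have : y (y' x) = y' (y x) := by
        rw [← Module.End.mul_apply, ← Module.End.mul_apply, hcomm]
      rw [this, hmemE x hx, map_smul]
    have hci : y'inv * y = y * y'inv := by
      have h1 : y'inv * (y * y') * y'inv = y'inv * (y' * y) * y'inv := by rw [hcomm]
      calc y'inv * y = y'inv * y * (y' * y'inv) := by rw [hy'l, mul_one]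
        _ = y'inv * (y * y') * y'inv := by noncomm_ring
        _ = y'inv * (y' * y) * y'inv := h1
        _ = (y'inv * y') * (y * y'inv) := by noncomm_ring
        _ = y * y'inv := by rw [hy'r, one_mul]
    have hy'invE : ∀ x ∈ E, y'inv x ∈ E := by
      intro x hx
      rw [hE, Module.End.mem_eigenspace_iff]
      have : y (y'inv x) = y'inv (y x) := by
        rw [← Module.End.mul_apply, ← Module.End.mul_apply, hci]
      rw [this, hmemE x hx, map_smul]
    set A' : Module.End F E := y'.restrict hy'E with hA'
    set B' : Module.End F E := y'inv.restrict hy'invE with hB'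
    have hBA : B' * A' = 1 := by
      ext v
      have h1 := Module.End.mul_apply y'inv y' (v : V)
      rw [hy'r] at h1
      simp only [Module.End.mul_apply, Module.End.one_apply, hB', hA',
        LinearMap.restrict_coe_apply]
      simpa using h1.symm
    set T : Module.End F E :=
      (q ^ 2 • A' - μ • 1) * (μ • 1 - (q⁻¹) ^ 2 • A') * (μ • 1 - c • B') with hT
    -- factorwise restriction
    have s3 : ∀ w : E, (y - c • y'inv) (w : V) = (((μ • 1 - c • B') w : E) : V) := by
      intro w
      simp [hB', LinearMap.restrict_coe_apply, hmemE _ w.2]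
    have s2 : ∀ w : E,
        (y - (q⁻¹) ^ 2 • y') (w : V) = (((μ • 1 - (q⁻¹) ^ 2 • A') w : E) : V) := by
      intro w
      simp [hA', LinearMap.restrict_coe_apply, hmemE _ w.2]
    have s1 : ∀ w : E,
        (q ^ 2 • y' - y) (w : V) = (((q ^ 2 • A' - μ • 1) w : E) : V) := by
      intro w
      simp [hA', LinearMap.restrict_coe_apply, hmemE _ w.2]
    have hPT : ∀ v : E, P (v : V) = ((T v : E) : V) := by
      intro v
      have h0 : P (v : V)
          = (q ^ 2 • y' - y) ((y - (q⁻¹) ^ 2 • y') ((y - c • y'inv) (v : V))) := by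
        rw [hP]; simp [Module.End.mul_apply]
      rw [h0, s3 v, s2 _, s1 _, hT]
      simp [Module.End.mul_apply]
    -- T = 0
    have hT0 : T = 0 := by
      ext v
      have h0 : (Polynomial.aeval y f0 * P) (v : V) = 0 := by rw [hkey0]; rfl
      rw [Module.End.mul_apply, hPT v] at h0
      rw [aeval_apply_eig y μ _ (hmemE _ (T v).2) f0] at h0
      rcases smul_eq_zero.mp h0 with h | h
      · exact absurd h hval
      · exact h.trans rfl
    -- hence A' is annihilated by g
    set g : Polynomial F :=
      (Polynomial.C (q ^ 2) * Polynomial.X - Polynomial.C μ) *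
        (Polynomial.C μ - Polynomial.C ((q⁻¹) ^ 2) * Polynomial.X) *
        (Polynomial.C μ * Polynomial.X - Polynomial.C c) with hgdef
    have hGA : (μ • (1 : Module.End F E) - c • B') * A' = μ • A' - c • 1 := by
      rw [sub_mul, smul_mul_assoc, one_mul, smul_mul_assoc, hBA]
    have hTA : T * A' = (q ^ 2 • A' - μ • 1) *
        ((μ • 1 - (q⁻¹) ^ 2 • A') * (μ • A' - c • 1)) := by
      rw [hT, mul_assoc, hGA, mul_assoc]
    have haev : Polynomial.aeval A' g = (q ^ 2 • A' - μ • 1) *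
        ((μ • 1 - (q⁻¹) ^ 2 • A') * (μ • A' - c • 1)) := by
      simp only [hgdef, map_mul, map_sub, Polynomial.aeval_C, Polynomial.aeval_X,
        Algebra.algebraMap_eq_smul_one, smul_mul_assoc, one_mul, mul_assoc]
    have hg0 : Polynomial.aeval A' g = 0 := by
      rw [haev, ← hTA, hT0, zero_mul]
    -- E is nontrivial and finite-dimensional, so A' has an eigenvalue
    have hEne : E ≠ ⊥ := hev
    have : Nontrivial E := Submodule.nontrivial_iff_ne_bot.mpr hEne
    obtain ⟨lam, hlam⟩ := Module.End.exists_eigenvalue A'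
    obtain ⟨w, hw⟩ := hlam.exists_hasEigenvector
    have hweq : A' w = lam • w := Module.End.mem_eigenspace_iff.mp hw.1
    -- lam is an eigenvalue of y'
    have hspec : lam ∈ spectrum F y' := by
      have h1 : y' (w : V) = lam • (w : V) := by
        have h2 := congrArg (Subtype.val) hweq
        rw [hA', LinearMap.restrict_coe_apply] at h2
        simpa using h2
      have h2 : (w : V) ≠ 0 := fun h => hw.2 (Subtype.ext h)
      have : y'.HasEigenvalue lam :=
        Module.End.hasEigenvalue_of_hasEigenvector
          ⟨Module.End.mem_eigenspace_iff.mpr h1, h2⟩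
      exact Module.End.hasEigenvalue_iff_mem_spectrum.mp this
    -- g(lam) = 0
    have hglam : g.eval lam = 0 := by
      have h1 := aeval_apply_eig A' lam w hweq g
      rw [hg0] at h1
      simp only [LinearMap.zero_apply] at h1
      rcases smul_eq_zero.mp h1.symm with h | h
      · exact h
      · exact absurd h hw.2
    rw [hgdef] at hglam
    simp only [Polynomial.eval_mul, Polynomial.eval_sub, Polynomial.eval_C,
      Polynomial.eval_X, mul_eq_zero, sub_eq_zero] at hglam
    refine ⟨lam, hspec, ?_⟩
    rcases hglam with (h | h) | h
    · exact Or.inr (Or.inl h.symm)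
    · exact Or.inr (Or.inr (Or.inl h))
    · have hlamne : lam ≠ 0 := by
        intro h0
        rw [h0, mul_zero] at h
        exact hc h.symm
      right; right; right
      field_simp
      exact h
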